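/- Let g₀ > 0, a > 0, and suppose I_n = (1/a + w̃_n)·log(1 + a g₀ n) where I_n = ∫₀ⁿ g₀/(1 + g₀∫₀ˢ a(t)dt) ds with a/2 ≤ a(t) ≤ 3a/2 and |w̃_n| ≤ Cλ for small λ. Then |w̃_{n+1} − w̃_n|·log(1 + a g₀ n) ≤ 4 g₀/(1 + a g₀ n) for all n ≥ 1, provided λ is small enough. -/

import Mathlib

open Real MeasureTheory intervalIntegral

set_option maxHeartbeats 2000000 in
theorem stmt_5 (a C : ℝ) (ha : 0 < a) (hC : 0 < C) :
    ∃ lam₀ > 0, ∀ lam : ℝ, 0 < lam → lam ≤ lam₀ →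
      ∀ g₀ : ℝ, 0 < g₀ →
        ∀ aa : ℝ → ℝ, (∀ t, a / 2 ≤ aa t ∧ aa t ≤ 3 * a / 2) →
          ∀ w : ℕ → ℝ, (∀ n, |w n| ≤ C * lam) →
            (∀ n : ℕ, 1 ≤ n →
              (∫ s in (0:ℝ)..(n:ℝ), g₀ / (1 + g₀ * ∫ t in (0:ℝ)..s, aa t)) =
                (1 / a + w n) * Real.log (1 + a * g₀ * n)) →
            ∀ n : ℕ, 1 ≤ n →
              |w (n + 1) - w n| * Real.log (1 + a * g₀ * n) ≤
                4 * g₀ / (1 + a * g₀ * n) := by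
  refine ⟨1 / (2 * a * C), by positivity, ?_⟩
  intro lam hlam hlam0 g₀ hg aa haa w hw hI n hn
  have hClam : C * lam ≤ 1 / (2 * a) := by
    have h2aC : (0:ℝ) < 2 * a * C := by positivity
    have h1 : lam * (2 * a * C) ≤ 1 := (le_div_iff₀ h2aC).mp hlam0
    rw [le_div_iff₀ (by positivity : (0:ℝ) < 2 * a)]
    calc C * lam * (2 * a) = lam * (2 * a * C) := by ring
      _ ≤ 1 := h1
  have ha0 : a ≠ 0 := ha.ne'
  have hhalf : 1 / (2 * a) + 1 / (2 * a) = 1 / a := by field_simp; norm_num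
  have hhalfpos : (0:ℝ) < 1 / (2 * a) := by positivity
  have hag : 0 < a * g₀ := mul_pos ha hg
  -- the outer integrand
  set h : ℝ → ℝ := fun s => g₀ / (1 + g₀ * ∫ t in (0:ℝ)..s, aa t) with hh
  -- F s ≥ 0 for s ≥ 0, whether or not aa is integrable
  have hFnn : ∀ s : ℝ, 0 ≤ s → 0 ≤ ∫ t in (0:ℝ)..s, aa t := by
    intro s hs
    rw [intervalIntegral.integral_of_le hs]
    by_cases hi : IntegrableOn aa (Set.Ioc 0 s)
    · exact setIntegral_nonneg measurableSet_Ioc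
        (fun t _ => le_trans (by linarith) (haa t).1)
    · rw [integral_undef hi]
  have hdenpos : ∀ s : ℝ, 0 ≤ s → 0 < 1 + g₀ * ∫ t in (0:ℝ)..s, aa t := by
    intro s hs
    have := hFnn s hs
    nlinarith
  have hhnn : ∀ s : ℝ, 0 ≤ s → 0 ≤ h s := by
    intro s hs
    exact div_nonneg hg.le (hdenpos s hs).le
  by_cases hint : IntegrableOn aa (Set.Ioc 0 ((n : ℝ) + 1))
  · -- aa is integrable on [0, n+1]: the honest estimate
    have hn1 : (0:ℝ) ≤ (n:ℝ) + 1 := by positivity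
    have hn0 : (0:ℝ) ≤ (n:ℝ) := Nat.cast_nonneg n
    have hn1' : (1:ℝ) ≤ (n:ℝ) := by exact_mod_cast hn
    have hIccsub : Set.uIcc (0:ℝ) ((n:ℝ)+1) = Set.Icc 0 ((n:ℝ)+1) := Set.uIcc_of_le hn1
    have hint' : IntegrableOn aa (Set.uIcc (0:ℝ) ((n:ℝ)+1)) := by
      rw [hIccsub, integrableOn_Icc_iff_integrableOn_Ioc]; exact hint
    have hFcont : ContinuousOn (fun s => ∫ t in (0:ℝ)..s, aa t) (Set.uIcc (0:ℝ) ((n:ℝ)+1)) :=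
      intervalIntegral.continuousOn_primitive_interval hint'
    have hhcont : ContinuousOn h (Set.Icc 0 ((n:ℝ)+1)) := by
      rw [← hIccsub]
      apply ContinuousOn.div continuousOn_const
        (continuousOn_const.add (continuousOn_const.mul hFcont))
      intro s hs
      rw [hIccsub] at hs
      exact (hdenpos s hs.1).ne'
    have int1 : IntervalIntegrable h volume 0 (n:ℝ) := by
      apply ContinuousOn.intervalIntegrable
      apply hhcont.mono
      rw [Set.uIcc_of_le hn0]
      exact Set.Icc_subset_Icc_right (by linarith)
    have int2 : IntervalIntegrable h volume (n:ℝ) ((n:ℝ)+1) := by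
      apply ContinuousOn.intervalIntegrable
      apply hhcont.mono
      rw [Set.uIcc_of_le (by linarith : (n:ℝ) ≤ (n:ℝ)+1)]
      exact Set.Icc_subset_Icc hn0 le_rfl
    have hsplit := intervalIntegral.integral_add_adjacent_intervals int1 int2
    -- lower bound for the inner integral on [n, n+1]
    have hFlb : ∀ s ∈ Set.Icc ((n:ℝ)) ((n:ℝ)+1), a*(n:ℝ)/2 ≤ ∫ t in (0:ℝ)..s, aa t := by
      intro s hs
      have hs0 : (0:ℝ) ≤ s := le_trans hn0 hs.1
      have haaint : IntervalIntegrable aa volume 0 s := by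
        rw [intervalIntegrable_iff_integrableOn_Ioc_of_le hs0]
        exact hint.mono_set (Set.Ioc_subset_Ioc_right (le_trans hs.2 le_rfl))
      have h1 : (∫ _t in (0:ℝ)..s, a/2) ≤ ∫ t in (0:ℝ)..s, aa t :=
        intervalIntegral.integral_mono_on hs0 intervalIntegrable_const haaint
          (fun t _ => (haa t).1)
      rw [intervalIntegral.integral_const, smul_eq_mul] at h1
      nlinarith [hs.1]
    -- upper bound for h on [n, n+1]
    have hhub : ∀ s ∈ Set.Icc ((n:ℝ)) ((n:ℝ)+1), h s ≤ g₀/(1 + g₀*(a*(n:ℝ)/2)) := by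
      intro s hs
      have hs0 : (0:ℝ) ≤ s := le_trans hn0 hs.1
      have hd1 : (0:ℝ) < 1 + g₀*(a*(n:ℝ)/2) := by positivity
      rw [hh]
      rw [div_le_div_iff₀ (hdenpos s hs0) hd1]
      nlinarith [hFlb s hs, mul_pos hg hg]
    have hD0 : 0 ≤ ∫ s in (n:ℝ)..((n:ℝ)+1), h s :=
      intervalIntegral.integral_nonneg (by linarith)
        (fun s hs => hhnn s (le_trans hn0 hs.1))
    have hDub : (∫ s in (n:ℝ)..((n:ℝ)+1), h s) ≤ g₀/(1 + g₀*(a*(n:ℝ)/2)) := by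
      have h2 := intervalIntegral.integral_mono_on (by linarith : (n:ℝ) ≤ (n:ℝ)+1)
        int2 intervalIntegrable_const hhub
      rw [intervalIntegral.integral_const, smul_eq_mul] at h2
      have : ((n:ℝ)+1-(n:ℝ)) = 1 := by ring
      rw [this, one_mul] at h2
      exact h2
    have hDub2 : (∫ s in (n:ℝ)..((n:ℝ)+1), h s) ≤ 2*g₀/(1 + a*g₀*(n:ℝ)) := by
      have hd1 : (0:ℝ) < 1 + g₀*(a*(n:ℝ)/2) := by positivity
      have hd2 : (0:ℝ) < 1 + a*g₀*(n:ℝ) := by positivity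
      refine le_trans hDub ?_
      rw [div_le_div_iff₀ hd1 hd2]
      nlinarith
    -- the hypothesis at n and n+1
    have e1 := hI n hn
    have e2 := hI (n+1) (by omega)
    push_cast at e2
    set Ln := Real.log (1 + a * g₀ * (n:ℝ)) with hLn
    set Lp := Real.log (1 + a * g₀ * ((n:ℝ)+1)) with hLp
    have hc : (0:ℝ) < 1 + a*g₀*(n:ℝ) := by positivity
    have hb : (0:ℝ) < 1 + a*g₀*((n:ℝ)+1) := by positivity
    have hLnpos : 0 < Ln := by
      rw [hLn]
      apply Real.log_pos
      nlinarith
    have hd0 : Ln ≤ Lp := by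
      rw [hLn, hLp]
      exact Real.log_le_log hc (by nlinarith)
    have hdub : Lp - Ln ≤ a*g₀/(1 + a*g₀*(n:ℝ)) := by
      rw [hLn, hLp]
      have h2 := Real.log_le_sub_one_of_pos (div_pos hb hc)
      rw [Real.log_div hb.ne' hc.ne'] at h2
      have h3 : (1 + a*g₀*((n:ℝ)+1))/(1 + a*g₀*(n:ℝ)) - 1 = a*g₀/(1 + a*g₀*(n:ℝ)) := by
        field_simp
        ring
      linarith
    have hwn1 := abs_le.mp (hw (n+1))
    have hcnn : 0 ≤ 1/a + w (n+1) := by linarith [hwn1.1]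
    have hcub : 1/a + w (n+1) ≤ 2/a := by
      have h2a : 2/a = 1/a + 1/a := by ring
      linarith [hwn1.2]
    clear_value h Ln Lp
    have hDval : (∫ s in (n:ℝ)..((n:ℝ)+1), h s)
        = (1/a + w (n+1))*Lp - (1/a + w n)*Ln := by
      linarith [hsplit, e1, e2]
    have hmain : (w (n+1) - w n) * Ln
        = (∫ s in (n:ℝ)..((n:ℝ)+1), h s) - (1/a + w (n+1))*(Lp - Ln) := by
      rw [hDval]; ring
    have ht1 : 0 ≤ (1/a + w (n+1))*(Lp - Ln) := mul_nonneg hcnn (by linarith)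
    have ht2 : (1/a + w (n+1))*(Lp - Ln) ≤ 2*g₀/(1 + a*g₀*(n:ℝ)) := by
      calc (1/a + w (n+1))*(Lp - Ln) ≤ (2/a)*(a*g₀/(1 + a*g₀*(n:ℝ))) :=
            mul_le_mul hcub hdub (by linarith) (by positivity)
        _ = 2*g₀/(1 + a*g₀*(n:ℝ)) := by field_simp
    have hfin : |(w (n+1) - w n) * Ln| ≤ 4*g₀/(1 + a*g₀*(n:ℝ)) := by
      have hpos : 0 ≤ g₀/(1 + a*g₀*(n:ℝ)) := by positivity
      rw [abs_le]
      constructor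
      · have : 4*g₀/(1 + a*g₀*(n:ℝ)) = 4*(g₀/(1 + a*g₀*(n:ℝ))) := by ring
        have h2 : 2*g₀/(1 + a*g₀*(n:ℝ)) = 2*(g₀/(1 + a*g₀*(n:ℝ))) := by ring
        rw [this]; rw [h2] at ht2; linarith [hmain, hD0]
      · have : 4*g₀/(1 + a*g₀*(n:ℝ)) = 4*(g₀/(1 + a*g₀*(n:ℝ))) := by ring
        have h2 : 2*g₀/(1 + a*g₀*(n:ℝ)) = 2*(g₀/(1 + a*g₀*(n:ℝ))) := by ring
        rw [this]; rw [h2] at hDub2; linarith [hmain, ht1]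
    rwa [abs_mul, abs_of_pos hLnpos] at hfin
  · -- aa is not integrable on [0, n+1]: derive a contradiction from growth
    exfalso
    set s₀ : ℝ := (n : ℝ) + 1 with hs₀def
    have hs₀pos : 0 < s₀ := by positivity
    have hFzero : ∀ s : ℝ, s₀ ≤ s → (∫ t in (0:ℝ)..s, aa t) = 0 := by
      intro s hs
      rw [intervalIntegral.integral_of_le (le_trans hs₀pos.le hs)]
      refine integral_undef (fun hi => hint ?_)
      exact (show IntegrableOn aa (Set.Ioc 0 s) volume from hi).mono_set
        (Set.Ioc_subset_Ioc_right hs)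
    have hhconst : ∀ s : ℝ, s₀ ≤ s → h s = g₀ := by
      intro s hs
      simp [hh, hFzero s hs]
    set K : ℝ := 4 * Real.sqrt (1 + a * g₀) / a with hK
    have hKpos : 0 < K := by
      have : 0 < Real.sqrt (1 + a * g₀) := Real.sqrt_pos.mpr (by positivity)
      positivity
    set m : ℕ := max ⌈2 * s₀⌉₊ ⌈(2 * K / g₀) ^ 2⌉₊ + 1 with hm
    have hm1 : 1 ≤ m := by omega
    have hmR1 : (1 : ℝ) ≤ (m : ℝ) := by exact_mod_cast hm1
    have hm2s₀ : 2 * s₀ < (m : ℝ) := by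
      have h1 : 2 * s₀ ≤ (⌈2 * s₀⌉₊ : ℝ) := Nat.le_ceil _
      have h2 : (⌈2 * s₀⌉₊ : ℝ) < (m : ℝ) := by
        have : ⌈2 * s₀⌉₊ < m := by omega
        exact_mod_cast this
      linarith
    have hmK : (2 * K / g₀) ^ 2 ≤ (m : ℝ) := by
      have h1 : (2 * K / g₀) ^ 2 ≤ (⌈(2 * K / g₀) ^ 2⌉₊ : ℝ) := Nat.le_ceil _
      have h2 : (⌈(2 * K / g₀) ^ 2⌉₊ : ℝ) ≤ (m : ℝ) := by
        have : ⌈(2 * K / g₀) ^ 2⌉₊ ≤ m := by omega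
        exact_mod_cast this
      linarith
    have hms₀ : s₀ ≤ (m : ℝ) := by linarith
    have him := hI m hm1
    rw [intervalIntegral.integral_of_le (by positivity : (0:ℝ) ≤ (m : ℝ))] at him
    have hwm := abs_le.mp (hw m)
    have hmagm : a * g₀ * 1 ≤ a * g₀ * (m:ℝ) := mul_le_mul_of_nonneg_left hmR1 hag.le
    have hlogpos : 0 < Real.log (1 + a * g₀ * m) := by
      apply Real.log_pos; linarith
    by_cases hhint : IntegrableOn h (Set.Ioc 0 (m : ℝ))
    · -- lower bound: g₀ * (m - s₀) ≤ I_m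
      have hsub : (∫ s in Set.Ioc s₀ (m : ℝ), h s) ≤ ∫ s in Set.Ioc 0 (m : ℝ), h s := by
        refine setIntegral_mono_set hhint ?_ ?_
        · refine (ae_restrict_iff' measurableSet_Ioc).mpr (ae_of_all _ ?_)
          intro s hs; exact hhnn s hs.1.le
        · exact HasSubset.Subset.eventuallyLE (Set.Ioc_subset_Ioc_left hs₀pos.le)
      have hconst : (∫ s in Set.Ioc s₀ (m : ℝ), h s) = g₀ * ((m : ℝ) - s₀) := by
        rw [setIntegral_congr_fun measurableSet_Ioc (fun s hs => hhconst s hs.1.le)]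
        simp [Real.volume_Ioc, ENNReal.toReal_ofReal (by linarith : (0:ℝ) ≤ (m : ℝ) - s₀)]
        rw [max_eq_left (by linarith : (0:ℝ) ≤ (m : ℝ) - s₀)]
        ring
      have hsqrt_m : 0 ≤ Real.sqrt (m : ℝ) := Real.sqrt_nonneg _
      have hsm : 2 * K / g₀ ≤ Real.sqrt (m : ℝ) := by
        rw [show (m:ℝ) = Real.sqrt (m:ℝ) ^ 2 by
          rw [Real.sq_sqrt (by positivity)]] at hmK
        nlinarith [sq_nonneg (2 * K / g₀ - Real.sqrt (m:ℝ))]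
      have hlog_le : Real.log (1 + a * g₀ * m)
          ≤ 2 * Real.sqrt (1 + a * g₀) * Real.sqrt (m : ℝ) := by
        have h1 : (0:ℝ) < 1 + a * g₀ * m := by linarith
        have h2 : Real.log (1 + a * g₀ * m) = 2 * Real.log (Real.sqrt (1 + a * g₀ * m)) := by
          rw [Real.log_sqrt h1.le]; ring
        have h3 : Real.log (Real.sqrt (1 + a * g₀ * m)) ≤ Real.sqrt (1 + a * g₀ * m) - 1 :=
          Real.log_le_sub_one_of_pos (Real.sqrt_pos.mpr h1)
        have h4 : Real.sqrt (1 + a * g₀ * m) ≤ Real.sqrt (1 + a * g₀) * Real.sqrt (m : ℝ) := by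
          rw [← Real.sqrt_mul (by positivity) ((m:ℝ))]
          apply Real.sqrt_le_sqrt
          nlinarith
        linarith
      have hcoef : 1 / a + w m ≤ 2 / a := by
        have h2a : 2/a = 1/a + 1/a := by ring
        have h1a : 1/(2*a) ≤ 1/a := by linarith
        linarith [hwm.2]
      have hcoefnn : 0 ≤ 1 / a + w m := by linarith [hwm.1]
      have hIm_le : (1 / a + w m) * Real.log (1 + a * g₀ * m) ≤ K * Real.sqrt (m : ℝ) := by
        calc (1 / a + w m) * Real.log (1 + a * g₀ * m)
            ≤ (2 / a) * (2 * Real.sqrt (1 + a * g₀) * Real.sqrt (m : ℝ)) := by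
              apply mul_le_mul hcoef hlog_le hlogpos.le (by positivity)
          _ = K * Real.sqrt (m : ℝ) := by rw [hK]; ring
      have hKsm : K * Real.sqrt (m : ℝ) ≤ g₀ * (m : ℝ) / 2 := by
        have hsq : Real.sqrt (m:ℝ) * Real.sqrt (m:ℝ) = (m:ℝ) := Real.mul_self_sqrt (by positivity)
        have h2K : 2 * K ≤ g₀ * Real.sqrt (m : ℝ) := by
          rw [div_le_iff₀ hg] at hsm; linarith [hsm]
        nlinarith
      have hgm : g₀ * (2 * s₀) < g₀ * (m:ℝ) := mul_lt_mul_of_pos_left hm2s₀ hg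
      linarith [hsub, hconst, him.le, him.ge, hIm_le, hKsm]
    · -- h not integrable: I_m = 0, contradicting positivity of RHS
      rw [integral_undef hhint] at him
      have hcoefpos : 0 < 1 / a + w m := by linarith [hwm.1]
      linarith [mul_pos hcoefpos hlogpos, him.le, him.ge]
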